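/- Fix G, s ∈ ℝ and V, h ≥ 0, and let N(g) = √(g² + G² + 2s). On the set {g > 0 : g² + 2s + G² > 0}, the derivative of Ξ(g) = (g² + 2s + G²)/(2V + 2g² + 2h·N(g)) − (1/2)·ln(V + g²) equals −g·N(g)·(2h²·N(g) + 2V·N(g) + 2g²·N(g) + 3g²h + 3hV)/(2(g² + V)(h·N(g) + g² + V)²), and in particular this derivative is non-positive. -/

import Mathlib

theorem stmt_4 (G s V h g : ℝ) (hV : 0 ≤ h) (hh : 0 ≤ V) (hg : 0 < g)
    (hdom : 0 < g ^ 2 + 2 * s + G ^ 2)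
    (hden1 : 0 < V + g ^ 2)
    (hden2 : 0 < h * Real.sqrt (g ^ 2 + G ^ 2 + 2 * s) + g ^ 2 + V) :
    HasDerivAt
      (fun x : ℝ =>
        (x ^ 2 + 2 * s + G ^ 2) /
            (2 * V + 2 * x ^ 2 + 2 * h * Real.sqrt (x ^ 2 + G ^ 2 + 2 * s))
          - (1 / 2) * Real.log (V + x ^ 2))
      (-(g * Real.sqrt (g ^ 2 + G ^ 2 + 2 * s) *
          (2 * h ^ 2 * Real.sqrt (g ^ 2 + G ^ 2 + 2 * s)
            + 2 * V * Real.sqrt (g ^ 2 + G ^ 2 + 2 * s)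
            + 2 * g ^ 2 * Real.sqrt (g ^ 2 + G ^ 2 + 2 * s)
            + 3 * g ^ 2 * h + 3 * h * V)) /
        (2 * (g ^ 2 + V) * (h * Real.sqrt (g ^ 2 + G ^ 2 + 2 * s) + g ^ 2 + V) ^ 2))
      g
    ∧ (-(g * Real.sqrt (g ^ 2 + G ^ 2 + 2 * s) *
          (2 * h ^ 2 * Real.sqrt (g ^ 2 + G ^ 2 + 2 * s)
            + 2 * V * Real.sqrt (g ^ 2 + G ^ 2 + 2 * s)
            + 2 * g ^ 2 * Real.sqrt (g ^ 2 + G ^ 2 + 2 * s)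
            + 3 * g ^ 2 * h + 3 * h * V)) /
        (2 * (g ^ 2 + V) * (h * Real.sqrt (g ^ 2 + G ^ 2 + 2 * s) + g ^ 2 + V) ^ 2)) ≤ 0 := by
  have harg : 0 < g ^ 2 + G ^ 2 + 2 * s := by linarith
  set N := Real.sqrt (g ^ 2 + G ^ 2 + 2 * s) with hNdef
  have hNpos : 0 < N := Real.sqrt_pos.mpr harg
  have hN2 : N ^ 2 = g ^ 2 + G ^ 2 + 2 * s := Real.sq_sqrt harg.le
  have hinner : HasDerivAt (fun x : ℝ => x ^ 2 + G ^ 2 + 2 * s) (2 * g) g := by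
    simpa [add_assoc] using ((hasDerivAt_pow 2 g).add_const (G ^ 2 + 2 * s))
  have hsq : HasDerivAt (fun x : ℝ => Real.sqrt (x ^ 2 + G ^ 2 + 2 * s))
      (2 * g / (2 * N)) g := hinner.sqrt harg.ne'
  have hu : HasDerivAt (fun x : ℝ => x ^ 2 + 2 * s + G ^ 2) (2 * g) g := by
    simpa [add_assoc] using ((hasDerivAt_pow 2 g).add_const (2 * s + G ^ 2))
  have hd : HasDerivAt (fun x : ℝ => 2 * V + 2 * x ^ 2 + 2 * h * Real.sqrt (x ^ 2 + G ^ 2 + 2 * s))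
      (2 * (2 * g) + 2 * h * (2 * g / (2 * N))) g := by
    have h1 : HasDerivAt (fun x : ℝ => 2 * V + 2 * x ^ 2) (2 * (2 * g)) g := by
      simpa using (((hasDerivAt_pow 2 g).const_mul 2).const_add (2 * V))
    have := h1.add (hsq.const_mul (2 * h))
    exact this
  have hg2 : 0 < g ^ 2 := pow_pos hg 2
  have hgV : 0 < g ^ 2 + V := by linarith
  have hdpos : 0 < 2 * V + 2 * g ^ 2 + 2 * h * N := by
    nlinarith [mul_nonneg hV hNpos.le]
  have hdne : 2 * V + 2 * g ^ 2 + 2 * h * N ≠ 0 := hdpos.ne'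
  have hq := hu.div hd hdne
  have hlog : HasDerivAt (fun x : ℝ => (1 / 2) * Real.log (V + x ^ 2))
      ((1 / 2) * (2 * g / (V + g ^ 2))) g := by
    have h1 : HasDerivAt (fun x : ℝ => V + x ^ 2) (2 * g) g := by
      simpa using ((hasDerivAt_pow 2 g).const_add V)
    exact (h1.log hden1.ne').const_mul (1 / 2)
  have hmain := hq.sub hlog
  clear_value N
  have hD1 : h * N + g ^ 2 + V ≠ 0 := hden2.ne'
  have hP : g ^ 2 + V ≠ 0 := hgV.ne'
  have hVg : V + g ^ 2 ≠ 0 := hden1.ne'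
  have hu2 : g ^ 2 + 2 * s + G ^ 2 = N ^ 2 := by rw [hN2]; ring
  constructor
  · refine hmain.congr_deriv ?_
    rw [← hNdef, hu2]
    field_simp
    ring
  · apply div_nonpos_of_nonpos_of_nonneg
    · have h1 : 0 ≤ 2 * h ^ 2 * N + 2 * V * N + 2 * g ^ 2 * N + 3 * g ^ 2 * h + 3 * h * V := by
        have := mul_nonneg (sq_nonneg h) hNpos.le
        have := mul_nonneg hh hNpos.le
        have := mul_nonneg hg2.le hNpos.le
        have := mul_nonneg hg2.le hV
        have := mul_nonneg hV hh
        nlinarith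
      have h2 : 0 ≤ g * N * (2 * h ^ 2 * N + 2 * V * N + 2 * g ^ 2 * N + 3 * g ^ 2 * h + 3 * h * V) :=
        mul_nonneg (mul_nonneg hg.le hNpos.le) h1
      linarith
    · have := mul_pos (mul_pos (by norm_num : (0:ℝ) < 2) hgV) (pow_pos hden2 2)
      linarith
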